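/- Full correctness of Algorithm 2's equation (4)–(5): under the notation above, g_A^v̄ * (∏_i y_{A,i})^{-z} = (∏_i r_i)^r * ∏_j z_j, where v̄ = z*∑_i x_{A,i} + r*∑_i k_i. -/
import Mathlib

private lemma zpow_sum' {G : Type*} [CommGroup G] (g : G) {α : Type*} (s : Finset α) (f : α → ℤ) :
    g ^ (∑ i ∈ s, f i) = ∏ i ∈ s, g ^ f i := by
  induction s using Finset.cons_induction with
  | empty => simp
  | cons a s ha ih => rw [Finset.sum_cons, Finset.prod_cons, zpow_add, ih]

/-- Full correctness of Algorithm 2's verification equation: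
`g_A ^ v̄ * (∏ i, y_A i) ^ (-z) = (∏ i, r_ i) ^ r * ∏ j, z_ j`. -/
theorem algorithm2_full_correctness
    (p : ℕ) [Fact p.Prime]
    (gA gB : (ZMod p)ˣ)
    (n m : ℕ) (xA k : Fin n → ℤ) (xB : Fin m → ℤ) (r z : ℤ)
    (yA : Fin n → (ZMod p)ˣ) (hyA : ∀ i, yA i = gA ^ xA i)
    (yB : Fin m → (ZMod p)ˣ) (hyB : ∀ j, yB j = gB ^ xB j)
    (r_ : Fin n → (ZMod p)ˣ)
    (hr : ∀ i, r_ i = gA ^ k i * (∏ j, yB j) ^ (-(k i)))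
    (s : (ZMod p)ˣ) (hs : s = (∏ i, gB ^ k i) ^ r)
    (z_ : Fin m → (ZMod p)ˣ) (hz : ∀ j, z_ j = s ^ xB j)
    (vbar : ℤ) (hv : vbar = z * (∑ i, xA i) + r * (∑ i, k i)) :
    gA ^ vbar * (∏ i, yA i) ^ (-z) = (∏ i, r_ i) ^ r * ∏ j, z_ j := by
  simp only [hv, hyA, hyB, hr, hs, hz, ← zpow_sum', Finset.prod_mul_distrib,
    mul_zpow, ← zpow_mul, ← zpow_add]
  have h1 : ∑ i : Fin n, (∑ j : Fin m, xB j) * -k i = -((∑ j : Fin m, xB j) * ∑ i : Fin n, k i) := by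
    rw [← Finset.mul_sum]; simp
  have h2 : ∑ j : Fin m, (∑ i : Fin n, k i) * r * xB j = (∑ i : Fin n, k i) * r * ∑ j : Fin m, xB j := by
    rw [← Finset.mul_sum]
  rw [mul_assoc, ← zpow_add, h1, h2,
    show -((∑ j : Fin m, xB j) * ∑ i : Fin n, k i) * r + (∑ i : Fin n, k i) * r * ∑ j : Fin m, xB j = 0 by ring,
    zpow_zero, mul_one]
  congr 1
  ring
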